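/- Let N : ℤ⁺ → ℚ be any function and let W : ℤ⁺ × ℤ^{≥0} → ℚ satisfy W(1,0) = W(1,1) = 1 together with recursion (I) at every (d,l) with d ≥ 2, l ≥ 1, 3d−2l ≥ 2, and recursion (II) at every (d,l) with d ≥ 2, l ≥ 2. Then for every integer d ≥ 2: W(d,0) = Σ_{d₁,d₂ ≥ 1, d₁+d₂=d} ( d₁·C(3d−3, 3d₁−2) − (d₂+1)·C(3d−3, 3d₁−3) ) · W(d₁,0)·W(d₂+1,1). -/

import Mathlib

open Finset

/-- Binomial coefficient `C(n,k)` as a rational number, with the convention that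
`C(n,k) = 0` whenever `k < 0` or `k > n`. -/
def binom (n k : ℤ) : ℚ :=
  if 0 ≤ k ∧ k ≤ n then (n.toNat.choose k.toNat : ℚ) else 0

/-- Kontsevich's recursion for the genus 0 Gromov-Witten invariants of `ℙ²`. -/
def KontsevichRec (N : ℕ → ℚ) : Prop :=
  ∀ d : ℕ, 2 ≤ d →
    N d = (1 / (6 * ((d : ℚ) - 1))) *
      ∑ d₁ ∈ Finset.Ico 1 d,
        (((d₁ : ℚ) * ((d - d₁ : ℕ) : ℚ)
            - 2 * ((d₁ : ℚ) - ((d - d₁ : ℕ) : ℚ)) ^ 2 / (3 * (d : ℚ) - 2))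
          * binom (3 * (d : ℤ) - 2) (3 * (d₁ : ℤ) - 1)
          * (d₁ : ℚ) * ((d - d₁ : ℕ) : ℚ) * N d₁ * N (d - d₁))

/-- Pairs `(d₀, d')` of positive integers with `d₀ + 2d' = d`. -/
def pairsHalf (d : ℕ) : Finset (ℕ × ℕ) :=
  (Finset.range (d + 1) ×ˢ Finset.range (d + 1)).filter
    fun p => 1 ≤ p.1 ∧ 1 ≤ p.2 ∧ p.1 + 2 * p.2 = d

/-- Pairs `(d₁, d₂)` of positive integers with `d₁ + d₂ = d`. -/
def pairsSum (d : ℕ) : Finset (ℕ × ℕ) :=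
  (Finset.HasAntidiagonal.antidiagonal d).filter fun p => 1 ≤ p.1 ∧ 1 ≤ p.2

/-- The term `T₀(d,l) = −(−2)^{3d/2−4} d² N(d/2)` if `d` is even and `2l = 3d−2`,
and `0` otherwise; the integer power of `−2` is taken in `ℚ`. -/
def T0 (N : ℕ → ℚ) (d l : ℕ) : ℚ :=
  if Even d ∧ 2 * l + 2 = 3 * d then
    -((-2 : ℚ) ^ (3 * (d : ℤ) / 2 - 4)) * (d : ℚ) ^ 2 * N (d / 2)
  else 0

/-- Solomon's recursion (I) for the Welschinger invariants of `(ℙ²,τ₂)`. -/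
def RecI (N : ℕ → ℚ) (W : ℕ → ℕ → ℚ) (d l : ℕ) : Prop :=
  W d l = T0 N d l
    + ∑ p ∈ pairsHalf d,
        (-2 : ℚ) ^ (3 * p.2 - 1) * (p.1 : ℚ) * (p.2 : ℚ) ^ 3
          * binom ((l : ℤ) - 1) (3 * (p.2 : ℤ) - 1) * N p.2 * W p.1 (l - 3 * p.2)
    + ∑ q ∈ pairsSum d, ∑ r ∈ Finset.HasAntidiagonal.antidiagonal (l - 1),
        binom ((l : ℤ) - 1) (r.1 : ℤ)
          * ((q.1 : ℚ) * (q.2 : ℚ)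
                * binom (3 * (d : ℤ) - 2 * (l : ℤ) - 2) (3 * (q.1 : ℤ) - 2 * (r.1 : ℤ) - 2)
              - (q.1 : ℚ) ^ 2
                * binom (3 * (d : ℤ) - 2 * (l : ℤ) - 2) (3 * (q.1 : ℤ) - 2 * (r.1 : ℤ) - 1))
          * W q.1 r.1 * W q.2 r.2

/-- Solomon's recursion (II) for the Welschinger invariants of `(ℙ²,τ₂)`. -/
def RecII (N : ℕ → ℚ) (W : ℕ → ℕ → ℚ) (d l : ℕ) : Prop :=
  W d l =
    ∑ p ∈ pairsHalf d,
        (-2 : ℚ) ^ (3 * p.2 - 2) * (p.1 : ℚ) * (p.2 : ℚ) ^ 2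
          * ((p.1 : ℚ) * binom ((l : ℤ) - 2) (3 * (p.2 : ℤ) - 2)
              - 2 * (p.2 : ℚ) * binom ((l : ℤ) - 2) (3 * (p.2 : ℤ) - 1))
          * N p.2 * W p.1 (l - 3 * p.2)
    + ∑ q ∈ pairsSum d, ∑ r ∈ Finset.HasAntidiagonal.antidiagonal (l - 2),
        binom ((l : ℤ) - 2) (r.1 : ℤ)
          * ((q.1 : ℚ) * (q.2 : ℚ)
                * binom (3 * (d : ℤ) - 2 * (l : ℤ) - 1) (3 * (q.1 : ℤ) - 2 * (r.1 : ℤ) - 2)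
              - (q.1 : ℚ) ^ 2
                * binom (3 * (d : ℤ) - 2 * (l : ℤ) - 1) (3 * (q.1 : ℤ) - 2 * (r.1 : ℤ) - 1))
          * W q.1 r.1 * W q.2 (r.2 + 1)

/-- The formula expressing the purely real invariant `W(d,0)` obtained by taking
the difference between the two recursions for `W(d+1,2)`. -/
def SolFormula (W : ℕ → ℕ → ℚ) (d : ℕ) : Prop :=
  W d 0 = ∑ q ∈ pairsSum d,
    ((q.1 : ℚ) * binom (3 * (d : ℤ) - 3) (3 * (q.1 : ℤ) - 2)
      - ((q.2 : ℚ) + 1) * binom (3 * (d : ℤ) - 3) (3 * (q.1 : ℤ) - 3))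
    * W q.1 0 * W (q.2 + 1) 1


lemma binom_of_lt {n k : ℤ} (h : n < k) : binom n k = 0 := by
  simp only [binom, if_neg (by omega : ¬(0 ≤ k ∧ k ≤ n))]

lemma binom_of_neg {n k : ℤ} (h : k < 0) : binom n k = 0 := by
  simp only [binom, if_neg (by omega : ¬(0 ≤ k ∧ k ≤ n))]

lemma binom_self {n : ℤ} (h : 0 ≤ n) : binom n n = 1 := by
  simp [binom, h]

lemma binom_zero {n : ℤ} (h : 0 ≤ n) : binom n 0 = 1 := by
  simp [binom, h]

lemma binom_symm {n k : ℤ} (h0 : 0 ≤ n) : binom n (n - k) = binom n k := by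
  by_cases hk : 0 ≤ k ∧ k ≤ n
  · rw [binom, binom, if_pos hk, if_pos ⟨by omega, by omega⟩]
    have h1 : (n - k).toNat = n.toNat - k.toNat := by omega
    rw [h1, Nat.choose_symm (by omega)]
  · rcases (by omega : k < 0 ∨ n < k) with h | h
    · rw [binom_of_neg h, binom_of_lt (by omega)]
    · rw [binom_of_lt h, binom_of_neg (by omega)]

lemma binom_pascal {n k : ℤ} (h : 0 ≤ n) : binom (n + 1) k = binom n k + binom n (k - 1) := by
  by_cases hk : 1 ≤ k ∧ k ≤ n
  · rw [binom, binom, binom, if_pos ⟨by omega, by omega⟩, if_pos ⟨by omega, by omega⟩,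
      if_pos ⟨by omega, by omega⟩]
    have h1 : (n + 1).toNat = n.toNat + 1 := by omega
    have h2 : k.toNat = (k - 1).toNat + 1 := by omega
    rw [h1, h2, Nat.choose_succ_succ]
    push_cast; ring
  · rcases (by omega : k < 0 ∨ k = 0 ∨ (k = n + 1) ∨ n + 1 < k) with h' | h' | h' | h'
    · rw [binom_of_neg h', binom_of_neg h', binom_of_neg (by omega)]; ring
    · subst h'; rw [binom_zero (by omega), binom_zero h, binom_of_neg (by omega)]; ring
    · subst h'
      have e : n + 1 - 1 = n := by ring
      rw [binom_self (by omega), binom_of_lt (by omega), e, binom_self h]; ring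
    · rw [binom_of_lt h', binom_of_lt (by omega), binom_of_lt (by omega)]; ring

lemma mem_pairsSum {m : ℕ} {q : ℕ × ℕ} :
    q ∈ pairsSum m ↔ q.1 + q.2 = m ∧ 1 ≤ q.1 ∧ 1 ≤ q.2 := by
  simp [pairsSum, Finset.mem_filter, Finset.HasAntidiagonal.mem_antidiagonal]
/-- Solomon's relations imply the formula for the purely real Welschinger
invariants `W(d,0)` of `(ℙ²,τ₂)` for all `d ≥ 2`. -/
theorem stmt_2 (N : ℕ → ℚ) (W : ℕ → ℕ → ℚ)
    (hW10 : W 1 0 = 1) (hW11 : W 1 1 = 1)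
    (hI : ∀ d l : ℕ, 2 ≤ d → 1 ≤ l → 2 * l + 2 ≤ 3 * d → RecI N W d l)
    (hII : ∀ d l : ℕ, 2 ≤ d → 2 ≤ l → RecII N W d l) :
    ∀ d : ℕ, 2 ≤ d → SolFormula W d := by
  intro d hd
  have hdZ : (2:ℤ) ≤ (d:ℤ) := by exact_mod_cast hd
  have hn : (0:ℤ) ≤ 3*(d:ℤ)-3 := by omega
  have b10 : binom 1 0 = 1 := binom_zero (by norm_num)
  have b11 : binom 1 1 = 1 := binom_self (by norm_num)
  have b00 : binom 0 0 = 1 := binom_zero (by norm_num)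
  have hI2 := hI (d+1) 2 (by omega) (by omega) (by omega)
  have hII2 := hII (d+1) 2 (by omega) (by omega)
  rw [RecI] at hI2
  rw [RecII] at hII2
  norm_num at hI2 hII2
  have hT0 : T0 N (d+1) 2 = 0 := by
    rw [T0, if_neg]; rintro ⟨-, h⟩; omega
  have hmemH : ∀ p ∈ pairsHalf (d+1), (1:ℤ) ≤ (p.2:ℤ) := by
    intro p hp
    simp only [pairsHalf, Finset.mem_filter] at hp
    exact_mod_cast hp.2.2.1
  -- canonical form of recursion I
  have hAB : W (d+1) 2 = ∑ q ∈ pairsSum (d+1),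
      (((q.1:ℚ) * (q.2:ℚ) * binom (3*(d:ℤ)-3) (3*(q.1:ℤ)-2)
          - (q.1:ℚ)^2 * binom (3*(d:ℤ)-3) (3*(q.1:ℤ)-1)) * W q.1 0 * W q.2 1
       + ((q.1:ℚ) * (q.2:ℚ) * binom (3*(d:ℤ)-3) (3*(q.1:ℤ)-4)
          - (q.1:ℚ)^2 * binom (3*(d:ℤ)-3) (3*(q.1:ℤ)-3)) * W q.1 1 * W q.2 0) := by
    rw [hI2, hT0, zero_add]
    rw [Finset.sum_eq_zero (fun p hp => by
      have h2 := hmemH p hp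
      rw [binom_of_lt (by omega : (1:ℤ) < 3 * (p.2:ℤ) - 1)]
      ring), zero_add]
    simp only [show (Finset.HasAntidiagonal.antidiagonal 1 : Finset (ℕ×ℕ)) = {(0,1),(1,0)} from by decide,
      Finset.sum_pair (show ((0:ℕ),(1:ℕ)) ≠ (1,0) from by decide)]
    apply Finset.sum_congr rfl
    intro q hq
    norm_num [b10, b11]
    rw [show 3*((d:ℤ)+1)-4-2 = 3*(d:ℤ)-3 from by ring,
      show 3*(q.1:ℤ)-2-2 = 3*(q.1:ℤ)-4 from by ring,
      show 3*(q.1:ℤ)-2-1 = 3*(q.1:ℤ)-3 from by ring]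
    try ring
  -- canonical form of recursion II
  have hC : W (d+1) 2 = ∑ q ∈ pairsSum (d+1),
      ((q.1:ℚ) * (q.2:ℚ) * binom (3*(d:ℤ)-2) (3*(q.1:ℤ)-2)
        - (q.1:ℚ)^2 * binom (3*(d:ℤ)-2) (3*(q.1:ℤ)-1)) * W q.1 0 * W q.2 1 := by
    rw [hII2]
    rw [Finset.sum_eq_zero (fun p hp => by
      have h2 := hmemH p hp
      rw [binom_of_lt (by omega : (0:ℤ) < 3 * (p.2:ℤ) - 2),
        binom_of_lt (by omega : (0:ℤ) < 3 * (p.2:ℤ) - 1)]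
      ring), zero_add]
    apply Finset.sum_congr rfl
    intro q hq
    rw [b00, show 3*((d:ℤ)+1)-4-1 = 3*(d:ℤ)-2 from by ring]
    ring
  -- swap reindexing of the B-part
  have hswap : ∑ q ∈ pairsSum (d+1),
      ((q.1:ℚ) * (q.2:ℚ) * binom (3*(d:ℤ)-3) (3*(q.1:ℤ)-4)
        - (q.1:ℚ)^2 * binom (3*(d:ℤ)-3) (3*(q.1:ℤ)-3)) * W q.1 1 * W q.2 0
    = ∑ q ∈ pairsSum (d+1),
      ((q.1:ℚ) * (q.2:ℚ) * binom (3*(d:ℤ)-3) (3*(q.1:ℤ)-2)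
        - (q.2:ℚ)^2 * binom (3*(d:ℤ)-3) (3*(q.1:ℤ)-3)) * W q.1 0 * W q.2 1 := by
    refine Finset.sum_nbij' Prod.swap Prod.swap ?_ ?_ ?_ ?_ ?_
    · intro a ha; rw [mem_pairsSum] at ha ⊢
      simp only [Prod.fst_swap, Prod.snd_swap]; omega
    · intro a ha; rw [mem_pairsSum] at ha ⊢
      simp only [Prod.fst_swap, Prod.snd_swap]; omega
    · intro a _; rfl
    · intro a _; rfl
    · intro a ha
      rw [mem_pairsSum] at ha
      have hsum : (a.1:ℤ) + (a.2:ℤ) = (d:ℤ) + 1 := by exact_mod_cast ha.1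
      simp only [Prod.fst_swap, Prod.snd_swap]
      rw [show 3*(a.1:ℤ)-4 = (3*(d:ℤ)-3) - (3*(a.2:ℤ)-2) from by omega,
        show 3*(a.1:ℤ)-3 = (3*(d:ℤ)-3) - (3*(a.2:ℤ)-3) from by omega,
        binom_symm hn, binom_symm hn]
      ring
  -- the key vanishing sum
  have hkey : ∑ q ∈ pairsSum (d+1),
      ((q.1:ℚ) * binom (3*(d:ℤ)-3) (3*(q.1:ℤ)-2)
        - (q.2:ℚ) * binom (3*(d:ℤ)-3) (3*(q.1:ℤ)-3)) * W q.1 0 * W q.2 1 = 0 := by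
    have hsum0 : ((d:ℚ)+1) * ∑ q ∈ pairsSum (d+1),
        ((q.1:ℚ) * binom (3*(d:ℤ)-3) (3*(q.1:ℤ)-2)
          - (q.2:ℚ) * binom (3*(d:ℤ)-3) (3*(q.1:ℤ)-3)) * W q.1 0 * W q.2 1 = 0 := by
      rw [Finset.mul_sum]
      have expand : ∀ q ∈ pairsSum (d+1),
          ((d:ℚ)+1) * (((q.1:ℚ) * binom (3*(d:ℤ)-3) (3*(q.1:ℤ)-2)
            - (q.2:ℚ) * binom (3*(d:ℤ)-3) (3*(q.1:ℤ)-3)) * W q.1 0 * W q.2 1)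
          = (((q.1:ℚ) * (q.2:ℚ) * binom (3*(d:ℤ)-3) (3*(q.1:ℤ)-2)
              - (q.1:ℚ)^2 * binom (3*(d:ℤ)-3) (3*(q.1:ℤ)-1)) * W q.1 0 * W q.2 1
            + ((q.1:ℚ) * (q.2:ℚ) * binom (3*(d:ℤ)-3) (3*(q.1:ℤ)-2)
              - (q.2:ℚ)^2 * binom (3*(d:ℤ)-3) (3*(q.1:ℤ)-3)) * W q.1 0 * W q.2 1)
            - ((q.1:ℚ) * (q.2:ℚ) * binom (3*(d:ℤ)-2) (3*(q.1:ℤ)-2)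
              - (q.1:ℚ)^2 * binom (3*(d:ℤ)-2) (3*(q.1:ℤ)-1)) * W q.1 0 * W q.2 1 := by
        intro q hq
        rw [mem_pairsSum] at hq
        have hcast : (q.1:ℚ) + (q.2:ℚ) = (d:ℚ) + 1 := by exact_mod_cast hq.1
        rw [show (3*(d:ℤ)-2) = (3*(d:ℤ)-3)+1 from by ring, binom_pascal hn, binom_pascal hn,
          show 3*(q.1:ℤ)-2-1 = 3*(q.1:ℤ)-3 from by ring,
          show 3*(q.1:ℤ)-1-1 = 3*(q.1:ℤ)-2 from by ring]
        linear_combination -(((q.1:ℚ) * binom (3*(d:ℤ)-3) (3*(q.1:ℤ)-2)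
          - (q.2:ℚ) * binom (3*(d:ℤ)-3) (3*(q.1:ℤ)-3)) * W q.1 0 * W q.2 1) * hcast
      rw [Finset.sum_congr rfl expand, Finset.sum_sub_distrib, Finset.sum_add_distrib, ← hswap]
      have hWW := hAB.symm.trans hC
      rw [Finset.sum_add_distrib] at hWW
      linarith [hWW]
    have hdne : ((d:ℚ)+1) ≠ 0 := by positivity
    exact (mul_eq_zero.mp hsum0).resolve_left hdne
  -- split off the (d,1) term and reindex
  have hsplit : pairsSum (d+1)
      = insert (d,1) ((pairsSum d).image fun q => (q.1, q.2+1)) := by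
    ext q
    simp only [mem_pairsSum, Finset.mem_insert, Finset.mem_image, Prod.mk.injEq]
    constructor
    · rintro ⟨h1, h2, h3⟩
      by_cases hb : q.2 = 1
      · left
        have : q.1 = d := by omega
        cases q; simp_all
      · right
        refine ⟨(q.1, q.2 - 1), by simp [mem_pairsSum]; omega, ?_⟩
        cases q; simp; omega
    · rintro (h | ⟨a, ha, ha2⟩)
      · subst h; omega
      · rcases q with ⟨q1, q2⟩
        simp at ha2 ⊢; omega
  have hnotmem : (d,1) ∉ (pairsSum d).image fun q => (q.1, q.2+1) := by
    simp only [Finset.mem_image, Prod.mk.injEq, not_exists]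
    rintro a ⟨ha, h1, h2⟩
    rw [mem_pairsSum] at ha; omega
  rw [hsplit, Finset.sum_insert hnotmem, Finset.sum_image (by
    intro x hx y hy hxy
    rw [Prod.mk.injEq] at hxy
    exact Prod.ext hxy.1 (by omega))] at hkey
  rw [SolFormula]
  have hb1 : binom (3*(d:ℤ)-3) (3*(d:ℤ)-2) = 0 := binom_of_lt (by omega)
  have hb2 : binom (3*(d:ℤ)-3) (3*(d:ℤ)-3) = 1 := binom_self hn
  norm_num [hb1, hb2, hW11] at hkey
  linarith [hkey]
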